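/- Let G be a group extension 1 → A → G → Q → 1 with A finitely generated free abelian, Q finite. Declare two infinite virtually cyclic subgroups V₁, V₂ ≤ G equivalent if (A ∩ V₁)^max = (A ∩ V₂)^max, where C^max denotes the unique maximal infinite cyclic subgroup of A containing an infinite cyclic subgroup C ≤ A. Then this is a well-defined equivalence relation on the set of infinite virtually cyclic subgroups of G: in particular, for every infinite virtually cyclic subgroup V ≤ G, the intersection A ∩ V is infinite cyclic (hence (A∩V)^max is defined). -/

import Mathlib

open Subgroup

section helpers
variable {G : Type*} [Group G] {A : Subgroup G}

private lemma pow_right_cancel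
    (hcomm : ∀ a b : G, a ∈ A → b ∈ A → a * b = b * a)
    (htf : ∀ a ∈ A, a ≠ 1 → ∀ n : ℕ, 0 < n → a ^ n ≠ 1)
    {a b : G} (ha : a ∈ A) (hb : b ∈ A) {n : ℕ} (hn : 0 < n)
    (h : a ^ n = b ^ n) : a = b := by
  by_contra hne
  have hmem : a * b⁻¹ ∈ A := A.mul_mem ha (A.inv_mem hb)
  have hcom : Commute a b⁻¹ := hcomm a b⁻¹ ha (A.inv_mem hb)
  have hpow : (a * b⁻¹) ^ n = 1 := by
    rw [hcom.mul_pow, inv_pow, h, mul_inv_cancel]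
  exact htf _ hmem (by simpa [mul_inv_eq_one] using hne) n hn hpow

private lemma cyclic_of_pow_mem
    (hcomm : ∀ a b : G, a ∈ A → b ∈ A → a * b = b * a)
    (htf : ∀ a ∈ A, a ≠ 1 → ∀ n : ℕ, 0 < n → a ^ n ≠ 1)
    {H : Subgroup G} (hHA : H ≤ A) {z : G} {n : ℕ} (hn : 0 < n)
    (hpow : ∀ x ∈ H, x ^ n ∈ zpowers z) : ∃ m, m ∈ H ∧ H = zpowers m := by
  let S : AddSubgroup ℤ :=
    { carrier := {k : ℤ | ∃ x ∈ H, x ^ n = z ^ k}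
      zero_mem' := ⟨1, H.one_mem, by simp⟩
      add_mem' := by
        rintro k l ⟨x, hx, hxk⟩ ⟨y, hy, hyl⟩
        refine ⟨x * y, H.mul_mem hx hy, ?_⟩
        have hcom : Commute x y := hcomm x y (hHA hx) (hHA hy)
        rw [hcom.mul_pow, hxk, hyl, ← zpow_add]
      neg_mem' := by
        rintro k ⟨x, hx, hxk⟩
        exact ⟨x⁻¹, H.inv_mem hx, by rw [inv_pow, hxk, ← zpow_neg]⟩ }
  obtain ⟨d, hd⟩ := Int.subgroup_cyclic S
  have hdS : d ∈ S := hd ▸ AddSubgroup.subset_closure (Set.mem_singleton d)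
  obtain ⟨m, hmH, hmd⟩ := hdS
  refine ⟨m, hmH, le_antisymm ?_ (zpowers_le.mpr hmH)⟩
  intro x hx
  obtain ⟨k, hk⟩ := mem_zpowers_iff.mp (hpow x hx)
  have hkS : k ∈ S := ⟨x, hx, hk.symm⟩
  rw [hd, AddSubgroup.mem_closure_singleton] at hkS
  obtain ⟨j, hj⟩ := hkS
  have hxj : x ^ n = (m ^ j) ^ n := by
    rw [hk.symm.trans ?_]
    rw [← hj, smul_eq_mul, mul_comm, zpow_mul, ← hmd, ← zpow_natCast m n, ← zpow_mul,
      mul_comm, zpow_mul, zpow_natCast]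
  have := pow_right_cancel hcomm htf (hHA hx) (A.zpow_mem (hHA hmH) j) hn hxj
  exact this ▸ zpow_mem (mem_zpowers m) j

private lemma subgroup_le_zpowers {c : G} {H : Subgroup G} (hH : H ≤ zpowers c) :
    ∃ z, z ∈ H ∧ H = zpowers z := by
  let S : AddSubgroup ℤ :=
    { carrier := {k : ℤ | c ^ k ∈ H}
      zero_mem' := by simpa using H.one_mem
      add_mem' := fun hk hl => by rw [Set.mem_setOf_eq, zpow_add]; exact H.mul_mem hk hl
      neg_mem' := fun hk => by rw [Set.mem_setOf_eq, zpow_neg]; exact H.inv_mem hk }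
  obtain ⟨d, hd⟩ := Int.subgroup_cyclic S
  have hdS : d ∈ S := hd ▸ AddSubgroup.subset_closure (Set.mem_singleton d)
  refine ⟨c ^ d, hdS, le_antisymm ?_ (zpowers_le.mpr hdS)⟩
  intro x hx
  obtain ⟨k, hk⟩ := mem_zpowers_iff.mp (hH hx)
  have hkS : k ∈ S := show c ^ k ∈ H from hk ▸ hx
  rw [hd, AddSubgroup.mem_closure_singleton] at hkS
  obtain ⟨j, hj⟩ := hkS
  refine ⟨j, ?_⟩
  show (c ^ d) ^ j = x
  rw [← zpow_mul, show d * j = j • d by rw [smul_eq_mul]; ring, hj, hk]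

private lemma exists_finset_closure
    (hcomm : ∀ a b : G, a ∈ A → b ∈ A → a * b = b * a)
    (hfg : Group.FG A) {H : Subgroup G} (hHA : H ≤ A) :
    ∃ T : Finset G, Subgroup.closure (↑T) = H := by
  classical
  letI : CommGroup ↥A :=
    { (inferInstance : Group ↥A) with
      mul_comm := fun a b => Subtype.ext (hcomm a b a.2 b.2) }
  haveI := hfg
  haveI : Module.Finite ℤ (Additive ↥A) := Module.Finite.iff_addGroup_fg.mpr inferInstance
  haveI : IsNoetherian ℤ (Additive ↥A) := isNoetherian_of_isNoetherianRing_of_finite ℤ _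
  have hKfg : (H.subgroupOf A).FG := by
    have h1 : (AddSubgroup.toIntSubmodule ((H.subgroupOf A).toAddSubgroup)).FG :=
      IsNoetherian.noetherian _
    have h2 : ((H.subgroupOf A).toAddSubgroup).FG :=
      (Submodule.fg_iff_addSubgroup_fg _).mp h1
    exact (Subgroup.fg_iff_add_fg _).mpr h2
  obtain ⟨T, hT⟩ := hKfg
  refine ⟨T.image A.subtype, ?_⟩
  rw [Finset.coe_image, ← MonoidHom.map_closure, hT, subgroupOf_map_subtype,
    inf_of_le_left hHA]

private lemma cyclic_of_fg
    (hcomm : ∀ a b : G, a ∈ A → b ∈ A → a * b = b * a)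
    (htf : ∀ a ∈ A, a ≠ 1 → ∀ n : ℕ, 0 < n → a ^ n ≠ 1)
    (hfg : Group.FG A) {H : Subgroup G} (hHA : H ≤ A) {z : G}
    (hpow : ∀ x ∈ H, ∃ m : ℕ, 0 < m ∧ x ^ m ∈ zpowers z) :
    ∃ m, m ∈ H ∧ H = zpowers m := by
  obtain ⟨T, hT⟩ := exists_finset_closure hcomm hfg hHA
  have hTH : (↑T : Set G) ⊆ (H : Set G) := hT ▸ Subgroup.subset_closure
  choose! f hf0 hfz using fun t (ht : t ∈ T) => hpow t (hTH ht)
  set n : ℕ := ∏ t ∈ T, f t with hn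
  have hnpos : 0 < n := Finset.prod_pos fun t ht => hf0 t ht
  let K : Subgroup G :=
    { carrier := {x : G | x ∈ A ∧ x ^ n ∈ zpowers z}
      one_mem' := ⟨A.one_mem, by rw [one_pow]; exact one_mem _⟩
      mul_mem' := by
        rintro x y ⟨hxA, hxz⟩ ⟨hyA, hyz⟩
        refine ⟨A.mul_mem hxA hyA, ?_⟩
        rw [(show Commute x y from hcomm x y hxA hyA).mul_pow]
        exact mul_mem hxz hyz
      inv_mem' := by
        rintro x ⟨hxA, hxz⟩
        exact ⟨A.inv_mem hxA, by rw [inv_pow]; exact inv_mem hxz⟩ }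
  have hHK : H ≤ K := by
    rw [← hT]
    refine (closure_le K).mpr fun t ht => ⟨hHA (hTH ht), ?_⟩
    obtain ⟨k, hk⟩ := Finset.dvd_prod_of_mem f ht
    rw [hn, hk, pow_mul]
    exact pow_mem (hfz t ht) k
  exact cyclic_of_pow_mem hcomm htf hHA hnpos fun x hx => (hHK hx).2

private lemma zpow_mem_trick {C : Subgroup G} {d : G} {k : ℤ} (j : ℕ)
    (hy : (d ^ k) ^ j ∈ C) (i : ℤ) : (d ^ i) ^ (j * k.natAbs) ∈ C := by
  have h1 : (d ^ k) ^ j = d ^ (k * j) := by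
    rw [← zpow_natCast (d ^ k) j, ← zpow_mul]
  rcases Int.natAbs_eq k with hk | hk
  · have : (d ^ i) ^ (j * k.natAbs) = (d ^ (k * j)) ^ i := by
      rw [← zpow_natCast (d ^ i), ← zpow_mul, ← zpow_mul]
      congr 1
      conv_rhs => rw [hk]
      push_cast
      ring
    rw [this, ← h1]
    exact zpow_mem hy i
  · have : (d ^ i) ^ (j * k.natAbs) = (d ^ (k * j)) ^ (-i) := by
      rw [← zpow_natCast (d ^ i), ← zpow_mul, ← zpow_mul]
      congr 1
      push_cast
      rw [abs_of_nonpos (show k ≤ 0 by omega)]; ring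
    rw [this, ← h1]
    exact zpow_mem hy (-i)

end helpers


/-- An infinite cyclic subgroup. -/
def IsInfCyc {G : Type*} [Group G] (C : Subgroup G) : Prop :=
  (∃ g, C = Subgroup.zpowers g) ∧ (C : Set G).Infinite

/-- An infinite virtually cyclic subgroup: infinite, with a cyclic subgroup of
finite index. -/
def IsInfVirtCyc {G : Type*} [Group G] (V : Subgroup G) : Prop :=
  (V : Set G).Infinite ∧ ∃ c ∈ V, (Subgroup.zpowers c).relIndex V ≠ 0

/-- `M` is a maximal infinite cyclic subgroup of the subgroup `A`. -/
def IsMaxInfCycIn {G : Type*} [Group G] (A M : Subgroup G) : Prop :=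
  M ≤ A ∧ IsInfCyc M ∧ ∀ D, D ≤ A → IsInfCyc D → M ≤ D → M = D

/-- for `1 → A → G → Q → 1` with `A` finitely generated free
abelian and `Q` finite, every infinite virtually cyclic `V ≤ G` has `A ∩ V`
infinite cyclic, with a unique maximal infinite cyclic `(A ∩ V)^max ≤ A`
containing it; and "`(A ∩ V₁)^max = (A ∩ V₂)^max`" is a well-defined
equivalence relation on infinite virtually cyclic subgroups. -/
theorem stmt15 (G : Type*) [Group G] (A : Subgroup G) [A.Normal]
    (hcomm : ∀ a b : G, a ∈ A → b ∈ A → a * b = b * a)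
    (hfg : Group.FG A)
    (htf : ∀ a ∈ A, a ≠ 1 → ∀ n : ℕ, 0 < n → a ^ n ≠ 1)
    (hQ : Finite (G ⧸ A)) :
    (∀ V : Subgroup G, IsInfVirtCyc V →
      IsInfCyc (A ⊓ V) ∧ ∃! M : Subgroup G, IsMaxInfCycIn A M ∧ A ⊓ V ≤ M) ∧
    Equivalence (fun V₁ V₂ : {V : Subgroup G // IsInfVirtCyc V} =>
      ∃ M, IsMaxInfCycIn A M ∧ A ⊓ V₁.1 ≤ M ∧ A ⊓ V₂.1 ≤ M) := by
  classical
  haveI := hQ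
  have part1 : ∀ V : Subgroup G, IsInfVirtCyc V →
      IsInfCyc (A ⊓ V) ∧ ∃! M : Subgroup G, IsMaxInfCycIn A M ∧ A ⊓ V ≤ M := by
    intro V hV
    obtain ⟨hVinf, c, hcV, hcrel⟩ := hV
    have hAidx : A.index ≠ 0 := Subgroup.index_ne_zero_of_finite
    have hArel : A.relIndex V ≠ 0 := by
      intro h0
      have hd : A.relIndex V ∣ A.index := Subgroup.relIndex_dvd_index_of_normal A V
      rw [h0] at hd
      exact hAidx (zero_dvd_iff.mp hd)
    set C : Subgroup G := A ⊓ V with hCdef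
    have hCA : C ≤ A := inf_le_left
    have hCV : C ≤ V := inf_le_right
    have hCinf : (C : Set G).Infinite := by
      by_contra hfin
      rw [Set.not_infinite] at hfin
      haveI : Finite ↥C := hfin.to_subtype
      haveI : Finite ↥(A.subgroupOf V) := by
        rw [← Subgroup.inf_subgroupOf_right A V]
        exact Finite.of_equiv _
          (Subgroup.subgroupOfEquivOfLe (inf_le_right : A ⊓ V ≤ V)).symm.toEquiv
      have h1 : Nat.card ↥(A.subgroupOf V) ≠ 0 :=
        Nat.card_ne_zero.mpr ⟨inferInstance, inferInstance⟩
      have h2 : Nat.card ↥V ≠ 0 := by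
        rw [← Subgroup.card_mul_index (A.subgroupOf V)]
        exact mul_ne_zero h1 hArel
      haveI : Finite ↥V := (Nat.card_ne_zero.mp h2).2
      haveI : Finite ↥(V : Set G) := ‹Finite ↥V›
      exact hVinf (Set.toFinite _)
    have hzpcV : Subgroup.zpowers c ≤ V := Subgroup.zpowers_le.mpr hcV
    have hZrelV : (A ⊓ Subgroup.zpowers c).relIndex V ≠ 0 :=
      Subgroup.relIndex_inf_ne_zero hArel hcrel
    obtain ⟨z, hzZ, hZeq⟩ :=
      subgroup_le_zpowers (inf_le_right : A ⊓ Subgroup.zpowers c ≤ Subgroup.zpowers c)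
    have hCpow : ∀ x ∈ C, ∃ m : ℕ, 0 < m ∧ x ^ m ∈ Subgroup.zpowers z := by
      intro x hx
      obtain ⟨m, hm0, _, hmem⟩ :=
        Subgroup.exists_pow_mem_of_relIndex_ne_zero hZrelV (hCV hx)
      exact ⟨m, hm0, by rw [← hZeq]; exact hmem.1⟩
    obtain ⟨g, hgC, hCeq⟩ := cyclic_of_fg hcomm htf hfg hCA hCpow
    have hCisc : IsInfCyc C := ⟨⟨g, hCeq⟩, hCinf⟩
    let M : Subgroup G :=
      { carrier := {x : G | x ∈ A ∧ ∃ m : ℕ, 0 < m ∧ x ^ m ∈ C}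
        one_mem' := ⟨A.one_mem, 1, one_pos, by rw [pow_one]; exact C.one_mem⟩
        mul_mem' := by
          rintro x y ⟨hxA, m, hm, hxm⟩ ⟨hyA, l, hl, hyl⟩
          refine ⟨A.mul_mem hxA hyA, m * l, Nat.mul_pos hm hl, ?_⟩
          rw [(show Commute x y from hcomm x y hxA hyA).mul_pow, pow_mul, mul_comm m l,
            pow_mul]
          exact C.mul_mem (pow_mem hxm l) (pow_mem hyl m)
        inv_mem' := by
          rintro x ⟨hxA, m, hm, hxm⟩
          exact ⟨A.inv_mem hxA, m, hm, by rw [inv_pow]; exact C.inv_mem hxm⟩ }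
    have hMmem : ∀ x : G, x ∈ M ↔ x ∈ A ∧ ∃ m : ℕ, 0 < m ∧ x ^ m ∈ C := fun x => Iff.rfl
    have hMA : M ≤ A := fun x hx => ((hMmem x).mp hx).1
    have hCM : C ≤ M := fun x hx =>
      (hMmem x).mpr ⟨hCA hx, 1, one_pos, by rw [pow_one]; exact hx⟩
    have hMpow : ∀ x ∈ M, ∃ m : ℕ, 0 < m ∧ x ^ m ∈ Subgroup.zpowers g := by
      intro x hx
      obtain ⟨_, m, hm, hxm⟩ := (hMmem x).mp hx
      exact ⟨m, hm, hCeq ▸ hxm⟩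
    obtain ⟨mg, hmgM, hMeq⟩ := cyclic_of_fg hcomm htf hfg hMA hMpow
    have hMinf : (M : Set G).Infinite := hCinf.mono fun x hx => hCM hx
    have key : ∀ E : Subgroup G, E ≤ A → (∃ e, E = Subgroup.zpowers e) → C ≤ E → E ≤ M := by
      rintro E hEA ⟨e, rfl⟩ hCE x hx
      obtain ⟨w, hwC, hw1⟩ : ∃ w, w ∈ C ∧ w ≠ 1 := by
        obtain ⟨w, hw⟩ := (hCinf.diff (Set.finite_singleton 1)).nonempty
        exact ⟨w, hw.1, by simpa using hw.2⟩
      obtain ⟨k, hk⟩ := Subgroup.mem_zpowers_iff.mp (hCE hwC)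
      have hk0 : k ≠ 0 := by rintro rfl; rw [zpow_zero] at hk; exact hw1 hk.symm
      obtain ⟨i, hi⟩ := Subgroup.mem_zpowers_iff.mp hx
      refine (hMmem x).mpr ⟨hEA hx, 1 * k.natAbs,
        Nat.mul_pos one_pos (Int.natAbs_pos.mpr hk0), ?_⟩
      have htr := zpow_mem_trick (C := C) (d := e) (k := k) 1
        (by rw [pow_one, hk]; exact hwC) i
      rw [hi] at htr
      exact htr
    have hMmax : IsMaxInfCycIn A M := by
      refine ⟨hMA, ⟨⟨mg, hMeq⟩, hMinf⟩, ?_⟩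
      intro D hDA hDcyc hMD
      exact le_antisymm hMD (key D hDA hDcyc.1 (le_trans hCM hMD))
    refine ⟨hCisc, M, ⟨hMmax, hCM⟩, ?_⟩
    rintro M' ⟨hM'max, hCM'⟩
    exact hM'max.2.2 M hMA ⟨⟨mg, hMeq⟩, hMinf⟩ (key M' hM'max.1 hM'max.2.1.1 hCM')
  refine ⟨part1, ?_, ?_, ?_⟩
  · intro V
    obtain ⟨_, M, ⟨hMmax, hMle⟩, _⟩ := part1 V.1 V.2
    exact ⟨M, hMmax, hMle, hMle⟩
  · rintro V1 V2 ⟨M, h, h1, h2⟩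
    exact ⟨M, h, h2, h1⟩
  · rintro V1 V2 V3 ⟨M, hM, h1, h2⟩ ⟨M', hM', h2', h3⟩
    obtain ⟨_, Mu, hMu, huniq⟩ := part1 V2.1 V2.2
    have e1 : M = Mu := huniq M ⟨hM, h2⟩
    have e2 : M' = Mu := huniq M' ⟨hM', h2'⟩
    refine ⟨M, hM, h1, ?_⟩
    rw [e1, ← e2]
    exact h3
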